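/- For every c ∈ ℂ: if a > 0 then N⁺_{a,c} ∩ {z ∈ ℂ³ : z₂ = 0} = {(z₁, 0, c) : |z₁|² = 2a}, the boundary circle of the holomorphic disk {(z₁, 0, c) : |z₁|² ≤ 2a}; and if a < 0 then N⁺_{a,c} ∩ {z ∈ ℂ³ : z₁ = 0} = {(0, z₂, c) : |z₂|² = −2a}, the boundary circle of the holomorphic disk {(0, z₂, c) : |z₂|² ≤ −2a}. In particular, for every a ≠ 0 the fiber N⁺_{a,c} contains the boundary of a holomorphic disk whose area tends to 0 as a → 0. -/

import Mathlib

open Complex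

/-- Joyce's set `N⁺_{a,c}`. -/
noncomputable def NplusC (a : ℝ) (c : ℂ) : Set (Fin 3 → ℂ) :=
  {z : Fin 3 → ℂ |
    ‖z 0‖ ^ 2 - a = ‖z 1‖ ^ 2 + a ∧
    ‖z 1‖ ^ 2 + a = ‖z 2 - c‖ ^ 2 + |a| ∧
    (z 0 * z 1 * (z 2 - c)).im = 0 ∧ 0 ≤ (z 0 * z 1 * (z 2 - c)).re}

/-- For `a > 0` the part of `N⁺_{a,c}` with `z₂ = 0` is the boundary circle
`{(z₁,0,c) : |z₁|² = 2a}` of the holomorphic disk `{(z₁,0,c) : |z₁|² ≤ 2a}`, and for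
`a < 0` the part with `z₁ = 0` is the boundary circle `{(0,z₂,c) : |z₂|² = −2a}` of the
holomorphic disk `{(0,z₂,c) : |z₂|² ≤ −2a}`; so for `a ≠ 0` the fiber `N⁺_{a,c}`
contains the boundary of a holomorphic disk whose area `2π|a|` tends to `0` as
`a → 0`. -/
theorem NplusC_contains_disk_boundaries (c : ℂ) :
    (∀ a : ℝ, 0 < a →
      NplusC a c ∩ {z : Fin 3 → ℂ | z 1 = 0} =
        {z : Fin 3 → ℂ | ‖z 0‖ ^ 2 = 2 * a ∧ z 1 = 0 ∧ z 2 = c}) ∧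
    (∀ a : ℝ, a < 0 →
      NplusC a c ∩ {z : Fin 3 → ℂ | z 0 = 0} =
        {z : Fin 3 → ℂ | z 0 = 0 ∧ ‖z 1‖ ^ 2 = -(2 * a) ∧ z 2 = c}) := by
  constructor
  · intro a ha
    ext z
    simp only [Set.mem_inter_iff, Set.mem_setOf_eq, NplusC]
    constructor
    · rintro ⟨⟨h1, h2, _, _⟩, hz1⟩
      rw [hz1] at h1 h2
      simp only [norm_zero] at h1 h2
      rw [abs_of_pos ha] at h2
      have hzc : z 2 - c = 0 := by
        have : ‖z 2 - c‖ ^ 2 = 0 := by linarith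
        simpa [pow_eq_zero_iff, norm_eq_zero, sub_eq_zero] using this
      refine ⟨by linarith, hz1, by rwa [sub_eq_zero] at hzc⟩
    · rintro ⟨h0, h1, h2⟩
      refine ⟨⟨?_, ?_, ?_, ?_⟩, h1⟩ <;>
        simp [h0, h1, h2, abs_of_pos ha] <;> ring
  · intro a ha
    ext z
    simp only [Set.mem_inter_iff, Set.mem_setOf_eq, NplusC]
    constructor
    · rintro ⟨⟨h1, h2, _, _⟩, hz0⟩
      rw [hz0] at h1
      simp only [norm_zero] at h1
      rw [abs_of_neg ha] at h2
      have hab : ‖z 1‖ ^ 2 = -(2 * a) := by linarith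
      have hzc : z 2 - c = 0 := by
        have : ‖z 2 - c‖ ^ 2 = 0 := by linarith
        simpa [pow_eq_zero_iff, norm_eq_zero, sub_eq_zero] using this
      refine ⟨hz0, hab, by rwa [sub_eq_zero] at hzc⟩
    · rintro ⟨h0, h1, h2⟩
      refine ⟨⟨?_, ?_, ?_, ?_⟩, h0⟩ <;>
        simp [h0, h1, h2, abs_of_neg ha] <;> ring
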